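/- Let a, t ≥ 2 and 1 ≤ c < a. The graph G_{a,c,t}, obtained from the Turán graph T_{at,t} by choosing vertices u_1,...,u_c in part V_1 and v_1,...,v_c in part V_2, deleting all edges u_i v_j with i ≠ j, and adding all edges among {u_1,...,u_c} and all edges among {v_1,...,v_c}, is a(t−1)-regular, has a clique of size t+c−1, and has chromatic number exactly t+c−1. -/

import Mathlib

/-- The graph `G_{a,c,t}`: obtained from the Turán graph `T_{at,t}` (complete
`t`-partite, parts `V_i = {i} × Fin a`) by choosing `u_i = (0, i)` for `i < c` and
`v_i = (1, i)` for `i < c`, deleting all edges `u_i v_j` with `i ≠ j`, and adding all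
edges among the `u_i` and all edges among the `v_i`. -/
def Gact (a c t : ℕ) : SimpleGraph (Fin t × Fin a) where
  Adj u v := u ≠ v ∧
    (((u.1 : ℕ) ≠ (v.1 : ℕ) ∧
       ¬((u.1 : ℕ) = 0 ∧ (u.2 : ℕ) < c ∧ (v.1 : ℕ) = 1 ∧ (v.2 : ℕ) < c ∧ u.2 ≠ v.2) ∧
       ¬((v.1 : ℕ) = 0 ∧ (v.2 : ℕ) < c ∧ (u.1 : ℕ) = 1 ∧ (u.2 : ℕ) < c ∧ v.2 ≠ u.2)) ∨
     ((u.1 : ℕ) = 0 ∧ (v.1 : ℕ) = 0 ∧ (u.2 : ℕ) < c ∧ (v.2 : ℕ) < c) ∨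
     ((u.1 : ℕ) = 1 ∧ (v.1 : ℕ) = 1 ∧ (u.2 : ℕ) < c ∧ (v.2 : ℕ) < c))
  symm := by
    constructor
    rintro u v ⟨h1, ⟨hne, hd1, hd2⟩ | ⟨q1, q2, q3, q4⟩ | ⟨r1, r2, r3, r4⟩⟩
    · exact ⟨h1.symm, Or.inl ⟨hne.symm, hd2, hd1⟩⟩
    · exact ⟨h1.symm, Or.inr (Or.inl ⟨q2, q1, q4, q3⟩)⟩
    · exact ⟨h1.symm, Or.inr (Or.inr ⟨r2, r1, r4, r3⟩)⟩
  loopless := ⟨fun u h => h.1 rfl⟩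

/-- Numeric characterization of adjacency in `Gact`. -/
theorem Gact_adj_iff (a c t : ℕ) (u v : Fin t × Fin a) : (Gact a c t).Adj u v ↔
    (((u.1:ℕ) ≠ (v.1:ℕ) ∨ (u.2:ℕ) ≠ (v.2:ℕ)) ∧
    (((u.1 : ℕ) ≠ (v.1 : ℕ) ∧
       ¬((u.1 : ℕ) = 0 ∧ (u.2 : ℕ) < c ∧ (v.1 : ℕ) = 1 ∧ (v.2 : ℕ) < c ∧ (u.2:ℕ) ≠ (v.2:ℕ)) ∧
       ¬((v.1 : ℕ) = 0 ∧ (v.2 : ℕ) < c ∧ (u.1 : ℕ) = 1 ∧ (u.2 : ℕ) < c ∧ (v.2:ℕ) ≠ (u.2:ℕ))) ∨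
     ((u.1 : ℕ) = 0 ∧ (v.1 : ℕ) = 0 ∧ (u.2 : ℕ) < c ∧ (v.2 : ℕ) < c) ∨
     ((u.1 : ℕ) = 1 ∧ (v.1 : ℕ) = 1 ∧ (u.2 : ℕ) < c ∧ (v.2 : ℕ) < c))) := by
  have h1 : (u ≠ v) ↔ ((u.1:ℕ) ≠ (v.1:ℕ) ∨ (u.2:ℕ) ≠ (v.2:ℕ)) := by
    rw [ne_eq, Prod.ext_iff, Fin.ext_iff, Fin.ext_iff, not_and_or]
  have h2 : (u.2 ≠ v.2) ↔ ((u.2:ℕ) ≠ (v.2:ℕ)) := by rw [ne_eq, Fin.ext_iff]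
  have h3 : (v.2 ≠ u.2) ↔ ((v.2:ℕ) ≠ (u.2:ℕ)) := by rw [ne_eq, Fin.ext_iff]
  show (u ≠ v ∧ _) ↔ _
  rw [h1, h2, h3]

open Finset in
set_option maxHeartbeats 1000000 in
/-- For `a, t ≥ 2` and `1 ≤ c < a`, the graph `G_{a,c,t}` is `a(t−1)`-regular, has a
clique of size `t+c−1`, and has chromatic number exactly `t+c−1`. -/
theorem Gact_properties (a c t : ℕ) (ha : 2 ≤ a) (ht : 2 ≤ t) (hc1 : 1 ≤ c)
    (hca : c < a) :
    (∀ v, ((Gact a c t).neighborSet v).ncard = a * (t - 1)) ∧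
    (∃ s : Finset (Fin t × Fin a), (Gact a c t).IsNClique (t + c - 1) s) ∧
    (Gact a c t).chromaticNumber = (t + c - 1 : ℕ) := by
  classical
  have adj_iff := Gact_adj_iff a c t
  refine ⟨?_, ?_⟩
  · -- regularity
    intro v
    set g : Fin t × Fin a → Fin t × Fin a := fun w =>
      if (v.1:ℕ) ≤ 1 ∧ (v.2:ℕ) < c ∧ (w.1:ℕ) ≤ 1 ∧ (w.2:ℕ) < c ∧ (w.2:ℕ) ≠ (v.2:ℕ)
      then (if (w.1:ℕ) = 0 then (⟨1, by omega⟩, w.2) else (⟨0, by omega⟩, w.2)) else w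
      with hgdef
    have g2 : ∀ w, (g w).2 = w.2 := by
      intro w; rw [hgdef]; dsimp only; split_ifs <;> rfl
    have g1 : ∀ w, ((g w).1:ℕ) =
        if (v.1:ℕ) ≤ 1 ∧ (v.2:ℕ) < c ∧ (w.1:ℕ) ≤ 1 ∧ (w.2:ℕ) < c ∧ (w.2:ℕ) ≠ (v.2:ℕ)
        then (if (w.1:ℕ) = 0 then 1 else 0) else (w.1:ℕ) := by
      intro w; rw [hgdef]; dsimp only; split_ifs <;> rfl
    have hinv : ∀ w, g (g w) = w := by
      intro w
      by_cases hp : (v.1:ℕ) ≤ 1 ∧ (v.2:ℕ) < c ∧ (w.1:ℕ) ≤ 1 ∧ (w.2:ℕ) < c ∧ (w.2:ℕ) ≠ (v.2:ℕ)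
      · have h1 := g1 w
        have h2 := g2 w
        rw [if_pos hp] at h1
        have hpg : (v.1:ℕ) ≤ 1 ∧ (v.2:ℕ) < c ∧ ((g w).1:ℕ) ≤ 1 ∧ ((g w).2:ℕ) < c ∧
            ((g w).2:ℕ) ≠ (v.2:ℕ) := by
          refine ⟨hp.1, hp.2.1, ?_, ?_, ?_⟩
          · rw [h1]; split_ifs <;> omega
          · rw [h2]; exact hp.2.2.2.1
          · rw [h2]; exact hp.2.2.2.2
        have h1' := g1 (g w)
        have h2' := g2 (g w)
        rw [if_pos hpg] at h1'
        have hfst : ((g (g w)).1 : ℕ) = (w.1:ℕ) := by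
          rw [h1']
          have hle := hp.2.2.1
          by_cases h0 : (w.1:ℕ) = 0
          · rw [if_pos h0] at h1
            rw [if_neg (by omega : ¬ ((g w).1:ℕ) = 0)]
            omega
          · rw [if_neg h0] at h1
            rw [if_pos h1]
            omega
        exact Prod.ext (Fin.val_inj.mp hfst) (by rw [h2', h2])
      · have : g w = w := by rw [hgdef]; exact if_neg hp
        rw [this, this]
    have hginj : Function.Injective g := Function.Involutive.injective hinv
    have hmain : ∀ w, (Gact a c t).Adj v w ↔ ((g w).1 : ℕ) ≠ (v.1 : ℕ) := by
      intro w
      rw [adj_iff, g1]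
      by_cases hp : (v.1:ℕ) ≤ 1 ∧ (v.2:ℕ) < c ∧ (w.1:ℕ) ≤ 1 ∧ (w.2:ℕ) < c ∧ (w.2:ℕ) ≠ (v.2:ℕ)
      · rw [if_pos hp]
        obtain ⟨p1, p2, p3, p4, p5⟩ := hp
        split_ifs with h0 <;> omega
      · rw [if_neg hp]
        omega
    have himg : (Gact a c t).neighborSet v = g '' {w | (w.1:ℕ) ≠ (v.1:ℕ)} := by
      ext w
      simp only [SimpleGraph.mem_neighborSet, Set.mem_image, Set.mem_setOf_eq]
      constructor
      · intro h
        exact ⟨g w, (hmain w).mp h, hinv w⟩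
      · rintro ⟨z, hz, rfl⟩
        rw [hmain, hinv]
        exact hz
    rw [himg, Set.ncard_image_of_injective _ hginj]
    have hset : {w : Fin t × Fin a | (w.1:ℕ) ≠ (v.1:ℕ)} =
        ↑((univ.erase v.1) ×ˢ (univ : Finset (Fin a))) := by
      ext w
      simp [Fin.ext_iff]
    rw [hset, Set.ncard_coe_finset, Finset.card_product, Finset.card_erase_of_mem (mem_univ _)]
    simp [Nat.mul_comm]
  -- clique and chromatic number
  set f : Fin (t + c - 1) → Fin t × Fin a := fun k =>
    if h : (k:ℕ) < c then (⟨0, by omega⟩, ⟨(k:ℕ), by omega⟩)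
    else (⟨(k:ℕ) - c + 1, by have := k.isLt; omega⟩,
      if (k:ℕ) = c then ⟨c, hca⟩ else ⟨0, by omega⟩)
    with hfdef
  have fval : ∀ k : Fin (t + c - 1),
      (((f k).1 : ℕ), ((f k).2 : ℕ)) =
      if (k:ℕ) < c then ((0:ℕ), (k:ℕ)) else ((k:ℕ) - c + 1, if (k:ℕ) = c then c else 0) := by
    intro k
    rw [hfdef]
    dsimp only
    split_ifs <;> rfl
  have finj : Function.Injective f := by
    intro k l h
    have hk := fval k
    have hl := fval l
    rw [h] at hk
    rw [hk] at hl
    have hkb := k.isLt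
    have hlb := l.isLt
    rw [← Fin.val_inj]
    split_ifs at hl <;> simp only [Prod.mk.injEq] at hl <;> omega
  have hclique : (Gact a c t).IsNClique (t + c - 1) (univ.map ⟨f, finj⟩) := by
    constructor
    · rintro x hx y hy hxy
      simp only [coe_map, Set.mem_image, mem_coe, mem_univ, true_and, Function.Embedding.coeFn_mk,
        Set.image_univ, Set.mem_range] at hx hy
      obtain ⟨k, rfl⟩ := hx
      obtain ⟨l, rfl⟩ := hy
      have hk := fval k
      have hl := fval l
      have hkl : (k:ℕ) ≠ (l:ℕ) := fun h => hxy (congrArg f (Fin.val_inj.mp h))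
      have hkb := k.isLt
      have hlb := l.isLt
      rw [adj_iff]
      split_ifs at hk hl <;> simp only [Prod.mk.injEq] at hk hl <;> omega
    · simp
  refine ⟨⟨_, hclique⟩, ?_⟩
  set col : Fin t × Fin a → Fin (t + c - 1) := fun w =>
    if h1 : (w.1:ℕ) = 0 ∧ 1 ≤ (w.2:ℕ) ∧ (w.2:ℕ) < c then ⟨t + (w.2:ℕ) - 1, by omega⟩
    else if h2 : (w.1:ℕ) = 1 ∧ (w.2:ℕ) < c - 1 then ⟨t + (w.2:ℕ), by omega⟩
    else ⟨(w.1:ℕ), by have := w.1.isLt; omega⟩ with hcoldef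
  have colval : ∀ w, ((col w):ℕ) =
      if (w.1:ℕ) = 0 ∧ 1 ≤ (w.2:ℕ) ∧ (w.2:ℕ) < c then t + (w.2:ℕ) - 1
      else if (w.1:ℕ) = 1 ∧ (w.2:ℕ) < c - 1 then t + (w.2:ℕ) else (w.1:ℕ) := by
    intro w; rw [hcoldef]; dsimp only; split_ifs <;> rfl
  have hcol : (Gact a c t).Colorable (t + c - 1) := by
    refine ⟨SimpleGraph.Coloring.mk col ?_⟩
    intro u v hadj heq
    have h := congrArg Fin.val heq
    rw [colval u, colval v] at h
    rw [adj_iff] at hadj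
    have hu1 := u.1.isLt
    have hv1 := v.1.isLt
    split_ifs at h <;> omega
  apply le_antisymm
  · exact hcol.chromaticNumber_le
  · have := hclique.1.card_le_chromaticNumber
    rwa [hclique.2] at this
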